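/- If ν is a Volkenborn distribution on ℤ_p and μ is a bounded distribution on ℤ_p, then the convolution ν∗μ is a Volkenborn distribution. In particular the set of Volkenborn distributions is a module over the ring of bounded (ℤ_p-valued) distributions under convolution. -/

import Mathlib

/- We model ℂ_p (not available in Mathlib) as an abstract complete
nonarchimedean nontrivially normed field `K`. -/

open Filter Finset

/-- `μ n x` represents the value `μ(x + pⁿℤ_p)`: it depends only on `x mod pⁿ`. -/
def LocallyConst (p : ℕ) [Fact p.Prime] {K : Type*} [NormedField K]
    (μ : ℕ → ℤ_[p] → K) : Prop :=
  ∀ (n : ℕ) (x y : ℤ_[p]), PadicInt.toZModPow n x = PadicInt.toZModPow n y → μ n x = μ n y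

/-- The distribution compatibility relation
`μ(x + pⁿℤ_p) = ∑_{k=0}^{p-1} μ(x + k pⁿ + pⁿ⁺¹ℤ_p)`. -/
def IsDistrib (p : ℕ) [Fact p.Prime] {K : Type*} [NormedField K]
    (μ : ℕ → ℤ_[p] → K) : Prop :=
  ∀ (n : ℕ) (x : ℤ_[p]), μ n x = ∑ k ∈ Finset.range p, μ (n + 1) (x + (k : ℤ_[p]) * (p : ℤ_[p]) ^ n)

/-- `μ` is Volkenborn with bound `B`:
`|p·μ(x + pⁿ⁺¹ℤ_p) − μ(x + pⁿℤ_p)| ≤ B` for all `x`, `n`. -/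
def IsVolkenborn (p : ℕ) [Fact p.Prime] {K : Type*} [NormedField K]
    (μ : ℕ → ℤ_[p] → K) (B : ℝ) : Prop :=
  ∀ (n : ℕ) (x : ℤ_[p]), ‖(p : K) * μ (n + 1) x - μ n x‖ ≤ B

/-- The convolution of two distributions:
`(ν∗μ)(c + pⁿℤ_p) = ∑_{a=0}^{pⁿ-1} ν(a + pⁿℤ_p) μ(c − a + pⁿℤ_p)`. -/
noncomputable def distConv (p : ℕ) [Fact p.Prime] {K : Type*} [NormedField K]
    (ν μ : ℕ → ℤ_[p] → K) : ℕ → ℤ_[p] → K :=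
  fun n c => ∑ a ∈ Finset.range (p ^ n), ν n (a : ℤ_[p]) * μ n (c - (a : ℤ_[p]))

/-- Auxiliary: the distribution relation with minus signs. -/
lemma distrib_neg {p : ℕ} [Fact p.Prime] {K : Type*} [NormedField K]
    (μ : ℕ → ℤ_[p] → K) (hloc : LocallyConst p μ) (hdist : IsDistrib p μ)
    (n : ℕ) (x : ℤ_[p]) :
    μ n x = ∑ k ∈ Finset.range p, μ (n + 1) (x - (k : ℤ_[p]) * (p : ℤ_[p]) ^ n) := by
  rw [hdist n x]
  refine Finset.sum_nbij' (fun k => (p - k) % p) (fun k => (p - k) % p) ?_ ?_ ?_ ?_ ?_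
  · intro a _; exact mem_range.mpr (Nat.mod_lt _ (Fact.out : p.Prime).pos)
  · intro a _; exact mem_range.mpr (Nat.mod_lt _ (Fact.out : p.Prime).pos)
  · intro a ha
    rcases Nat.eq_zero_or_pos a with rfl | hpos
    · simp
    · have h1 : p - a < p := Nat.sub_lt (Fact.out : p.Prime).pos hpos
      rw [Nat.mod_eq_of_lt h1, Nat.sub_sub_self (le_of_lt (mem_range.mp ha)),
        Nat.mod_eq_of_lt (mem_range.mp ha)]
  · intro a ha
    rcases Nat.eq_zero_or_pos a with rfl | hpos
    · simp
    · have h1 : p - a < p := Nat.sub_lt (Fact.out : p.Prime).pos hpos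
      rw [Nat.mod_eq_of_lt h1, Nat.sub_sub_self (le_of_lt (mem_range.mp ha)),
        Nat.mod_eq_of_lt (mem_range.mp ha)]
  · intro a ha
    apply hloc
    rcases Nat.eq_zero_or_pos a with rfl | hpos
    · simp
    · have h1 : p - a < p := Nat.sub_lt (Fact.out : p.Prime).pos hpos
      rw [Nat.mod_eq_of_lt h1]
      have key : (x + (a : ℤ_[p]) * (p:ℤ_[p]) ^ n) - (x - ((p - a : ℕ) : ℤ_[p]) * (p:ℤ_[p]) ^ n)
          = ((p : ℤ_[p]))^(n+1) := by
        have : ((p - a : ℕ) : ℤ_[p]) = (p : ℤ_[p]) - a := by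
          push_cast [Nat.cast_sub (le_of_lt (mem_range.mp ha))]; ring
        rw [this]; ring
      have h0 : (PadicInt.toZModPow (n+1))
          ((x + (a : ℤ_[p]) * (p:ℤ_[p]) ^ n) - (x - ((p - a : ℕ) : ℤ_[p]) * (p:ℤ_[p]) ^ n)) = 0 := by
        rw [key]
        have : ((p:ℤ_[p]))^(n+1) = ((p^(n+1) : ℕ) : ℤ_[p]) := by push_cast; ring
        rw [this, map_natCast, ZMod.natCast_self]
      rw [map_sub] at h0
      exact sub_eq_zero.mp h0

/-- Auxiliary: splitting a sum over `range (p^(n+1))`. -/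
lemma sum_range_pow_succ {p : ℕ} [Fact p.Prime] {M : Type*} [AddCommMonoid M]
    (n : ℕ) (F : ℕ → M) :
    ∑ a ∈ Finset.range (p ^ (n+1)), F a
      = ∑ a ∈ Finset.range (p ^ n), ∑ k ∈ Finset.range p, F (a + k * p ^ n) := by
  have hpos : 0 < p ^ n := Nat.pow_pos (Fact.out : p.Prime).pos
  have hstep : ∑ a ∈ Finset.range (p ^ (n+1)), F a
      = ∑ x ∈ Finset.range (p ^ n) ×ˢ Finset.range p, F (x.1 + x.2 * p ^ n) := by
    refine Finset.sum_nbij' (fun a => (a % p ^ n, a / p ^ n)) (fun x => x.1 + x.2 * p ^ n)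
      ?_ ?_ ?_ ?_ ?_
    · intro a ha
      simp only [Finset.mem_product, mem_range]
      refine ⟨Nat.mod_lt _ hpos, ?_⟩
      rw [Nat.div_lt_iff_lt_mul hpos]
      have := mem_range.mp ha
      rwa [pow_succ, mul_comm] at this
    · intro x hx
      simp only [Finset.mem_product, mem_range] at hx
      apply mem_range.mpr
      calc x.1 + x.2 * p ^ n < p ^ n + x.2 * p ^ n := by omega
        _ = (x.2 + 1) * p ^ n := by ring
        _ ≤ p * p ^ n := Nat.mul_le_mul_right _ hx.2
        _ = p ^ (n + 1) := by ring
    · intro a _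
      exact Nat.mod_add_div' a (p ^ n)
    · intro x hx
      simp only [Finset.mem_product, mem_range] at hx
      have h1 : (x.1 + x.2 * p ^ n) % p ^ n = x.1 := by
        rw [Nat.add_mul_mod_self_right, Nat.mod_eq_of_lt hx.1]
      have h2 : (x.1 + x.2 * p ^ n) / p ^ n = x.2 := by
        rw [Nat.add_mul_div_right _ _ hpos, Nat.div_eq_of_lt hx.1, Nat.zero_add]
      simp [h1, h2]
    · intro a _
      congr 1
      exact (Nat.mod_add_div' a (p ^ n)).symm
  rw [hstep, Finset.sum_product]

/-- the convolution of a Volkenborn distribution with a bounded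
distribution is Volkenborn. -/
theorem stmt7 {p : ℕ} [Fact p.Prime] {K : Type*} [NontriviallyNormedField K]
    [IsUltrametricDist K] [CompleteSpace K]
    (ν μ : ℕ → ℤ_[p] → K)
    (hνloc : LocallyConst p ν) (hνdist : IsDistrib p ν)
    (hμloc : LocallyConst p μ) (hμdist : IsDistrib p μ)
    {Bν : ℝ} (hν : IsVolkenborn p ν Bν)
    {Bμ : ℝ} (hμ : ∀ (n : ℕ) (x : ℤ_[p]), ‖μ n x‖ ≤ Bμ) :
    ∃ B : ℝ, 0 ≤ B ∧ IsVolkenborn p (distConv p ν μ) B := by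
  refine ⟨max Bν 0 * max Bμ 0, mul_nonneg (le_max_right _ _) (le_max_right _ _), ?_⟩
  intro n c
  have hνn : ∀ (a k : ℕ), ν n ((a:ℤ_[p])) = ν n ((a:ℤ_[p]) + (k:ℤ_[p]) * (p:ℤ_[p]) ^ n) := by
    intro a k
    apply hνloc
    have h0 : (PadicInt.toZModPow n) ((k:ℤ_[p]) * (p:ℤ_[p])^n) = 0 := by
      have hc : ((k:ℤ_[p]) * (p:ℤ_[p])^n) = ((k * p^n : ℕ) : ℤ_[p]) := by push_cast; ring
      rw [hc, map_natCast, Nat.cast_mul, ZMod.natCast_self, mul_zero]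
    rw [map_add, h0, add_zero]
  have h1 : (p:K) * distConv p ν μ (n+1) c
      = ∑ a ∈ Finset.range (p^n), ∑ k ∈ Finset.range p,
          (p:K) * (ν (n+1) ((a:ℤ_[p]) + (k:ℤ_[p]) * (p:ℤ_[p])^n)
            * μ (n+1) ((c - (a:ℤ_[p])) - (k:ℤ_[p]) * (p:ℤ_[p])^n)) := by
    show (p:K) * ∑ a ∈ Finset.range (p ^ (n+1)), ν (n+1) (a:ℤ_[p]) * μ (n+1) (c - (a:ℤ_[p])) = _
    rw [sum_range_pow_succ n (fun a => ν (n+1) (a:ℤ_[p]) * μ (n+1) (c - (a:ℤ_[p]))), Finset.mul_sum]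
    refine Finset.sum_congr rfl fun a _ => ?_
    rw [Finset.mul_sum]
    refine Finset.sum_congr rfl fun k _ => ?_
    have hc : ((a + k * p^n : ℕ) : ℤ_[p]) = (a:ℤ_[p]) + (k:ℤ_[p]) * (p:ℤ_[p])^n := by
      push_cast; ring
    simp only [hc, ← sub_sub]
  have h2 : distConv p ν μ n c
      = ∑ a ∈ Finset.range (p^n), ∑ k ∈ Finset.range p,
          ν n ((a:ℤ_[p]) + (k:ℤ_[p]) * (p:ℤ_[p])^n)
            * μ (n+1) ((c - (a:ℤ_[p])) - (k:ℤ_[p]) * (p:ℤ_[p])^n) := by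
    show ∑ a ∈ Finset.range (p ^ n), ν n (a:ℤ_[p]) * μ n (c - (a:ℤ_[p])) = _
    refine Finset.sum_congr rfl fun a _ => ?_
    rw [distrib_neg μ hμloc hμdist n (c - (a:ℤ_[p])), Finset.mul_sum]
    exact Finset.sum_congr rfl fun k _ => by rw [← hνn a k]
  rw [h1, h2, ← Finset.sum_sub_distrib]
  refine IsUltrametricDist.norm_sum_le_of_forall_le_of_nonneg
    (mul_nonneg (le_max_right _ _) (le_max_right _ _)) fun a _ => ?_
  rw [← Finset.sum_sub_distrib]
  refine IsUltrametricDist.norm_sum_le_of_forall_le_of_nonneg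
    (mul_nonneg (le_max_right _ _) (le_max_right _ _)) fun k _ => ?_
  have heq : (p:K) * (ν (n+1) ((a:ℤ_[p]) + (k:ℤ_[p]) * (p:ℤ_[p])^n)
        * μ (n+1) ((c - (a:ℤ_[p])) - (k:ℤ_[p]) * (p:ℤ_[p])^n))
      - ν n ((a:ℤ_[p]) + (k:ℤ_[p]) * (p:ℤ_[p])^n)
        * μ (n+1) ((c - (a:ℤ_[p])) - (k:ℤ_[p]) * (p:ℤ_[p])^n)
      = ((p:K) * ν (n+1) ((a:ℤ_[p]) + (k:ℤ_[p]) * (p:ℤ_[p])^n)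
          - ν n ((a:ℤ_[p]) + (k:ℤ_[p]) * (p:ℤ_[p])^n))
        * μ (n+1) ((c - (a:ℤ_[p])) - (k:ℤ_[p]) * (p:ℤ_[p])^n) := by ring
  rw [heq, norm_mul]
  exact mul_le_mul (le_trans (hν n _) (le_max_left _ _))
    (le_trans (hμ _ _) (le_max_left _ _)) (norm_nonneg _)
    (le_max_right Bν 0)
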